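/- (Classicalisation theorem) Let A be an abstract Swiss cheese with δ_1(A) > 0. Then there exists a classical abstract Swiss cheese B such that δ_1(B) ≥ δ_1(A) and X_B ⊆ X_A. -/

import Mathlib

open Metric Set

/-- An abstract Swiss cheese: a sequence `((a_n, r_n))_{n ≥ 0}` of centres `a n ∈ ℂ` and
non-negative radii `r n ∈ [0, ∞)`. -/
structure SwissCheese where
  a : ℕ → ℂ
  r : ℕ → ℝ
  r_nonneg : ∀ n, 0 ≤ r n

namespace SwissCheese

/-- The associated Swiss cheese set `X_A = closedBall(a₀, r₀) ∖ ⋃_{n ≥ 1} ball(a_n, r_n)`. -/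
def cheeseSet (A : SwissCheese) : Set ℂ :=
  closedBall (A.a 0) (A.r 0) \ ⋃ n ∈ Set.Ici 1, ball (A.a n) (A.r n)

/-- The significant index set `S_A = {n ≥ 1 : r_n > 0}`. -/
def sig (A : SwissCheese) : Set ℕ := {n | 1 ≤ n ∧ 0 < A.r n}

/-- The radius sum `ρ(A) = ∑_{n ≥ 1} r_n` is finite. -/
def RadSummable (A : SwissCheese) : Prop := Summable fun n => A.r (n + 1)

/-- The radius sum `ρ(A) = ∑_{n ≥ 1} r_n`. -/
noncomputable def radSum (A : SwissCheese) : ℝ := ∑' n, A.r (n + 1)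

/-- The discrepancy `δ₁(A) = r₀ − ∑_{n ≥ 1} r_n`. -/
noncomputable def disc (A : SwissCheese) : ℝ := A.r 0 - A.radSum

/-- `A` is classical: `ρ(A) < ∞`, `r₀ > 0`, each significant closed disk is contained in
`ball(a₀, r₀)`, and distinct significant closed disks are disjoint. -/
def IsClassical (A : SwissCheese) : Prop :=
  A.RadSummable ∧ 0 < A.r 0 ∧ ∀ k ∈ A.sig,
    closedBall (A.a k) (A.r k) ⊆ ball (A.a 0) (A.r 0) ∧
    ∀ l ∈ A.sig, l ≠ k → closedBall (A.a k) (A.r k) ∩ closedBall (A.a l) (A.r l) = ∅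

/-- `A` is semiclassical: `ρ(A) < ∞`, `r₀ > 0`, each significant open disk is contained in
`ball(a₀, r₀)`, and distinct significant open disks are disjoint. -/
def IsSemiclassical (A : SwissCheese) : Prop :=
  A.RadSummable ∧ 0 < A.r 0 ∧ ∀ k ∈ A.sig,
    ball (A.a k) (A.r k) ⊆ ball (A.a 0) (A.r 0) ∧
    ∀ l ∈ A.sig, l ≠ k → ball (A.a k) (A.r k) ∩ ball (A.a l) (A.r l) = ∅

/-- `A` is annular: `a₀ = a₁` and `r₀ > r₁ > 0`. -/
def IsAnnular (A : SwissCheese) : Prop := A.a 0 = A.a 1 ∧ A.r 1 < A.r 0 ∧ 0 < A.r 1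

/-- The annular radius sum `ρ_ann(A) = ∑_{n ≥ 2} r_n`. -/
noncomputable def annRadSum (A : SwissCheese) : ℝ := ∑' n, A.r (n + 2)

/-- The annular discrepancy `δ_ann(A) = r₀ − r₁ − 2 ∑_{n ≥ 2} r_n`. -/
noncomputable def annDisc (A : SwissCheese) : ℝ := A.r 0 - A.r 1 - 2 * A.annRadSum

/-- `A` is redundancy-free: every significant open disk meets `closedBall(a₀, r₀)`, and no
significant open disk is contained in another one. -/
def IsRedundancyFree (A : SwissCheese) : Prop :=
  ∀ k ∈ A.sig, (ball (A.a k) (A.r k) ∩ closedBall (A.a 0) (A.r 0)).Nonempty ∧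
    ∀ l ∈ A.sig, l ≠ k → ¬ ball (A.a k) (A.r k) ⊆ ball (A.a l) (A.r l)

/-- `H_A(U)`: the set of significant indices whose closed disk meets `U`. -/
def HSet (A : SwissCheese) (U : Set ℂ) : Set ℕ :=
  {n | n ∈ A.sig ∧ (closedBall (A.a n) (A.r n) ∩ U).Nonempty}

/-- `ρ_U(A) = ∑_{n ∈ H_A(U)} r_n`. -/
noncomputable def rhoU (A : SwissCheese) (U : Set ℂ) : ℝ := ∑' n : A.HSet U, A.r n

/-- The error set `E(A)`. -/
def errorSet (A : SwissCheese) : Set ℂ :=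
  (⋃ m ∈ A.sig, ⋃ n ∈ A.sig, ⋃ _ : m ≠ n,
      closedBall (A.a m) (A.r m) ∩ closedBall (A.a n) (A.r n)) ∪
    ⋃ n ∈ A.sig, (ball (A.a 0) (A.r 0))ᶜ ∩ closedBall (A.a n) (A.r n)

/-- A Swiss cheese set is compact. -/
instance (A : SwissCheese) : CompactSpace A.cheeseSet :=
  isCompact_iff_compactSpace.mp
    ((isCompact_closedBall _ _).diff (isOpen_biUnion fun _ _ => isOpen_ball))

end SwissCheese


namespace SC9

lemma tsum_update' (f : ℕ → ℝ) (hf : Summable f) (i : ℕ) (x : ℝ) :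
    Summable (Function.update f i x) ∧
      ∑' n, Function.update f i x n = (∑' n, f n) + (x - f i) := by
  have hrw : Function.update f i x = fun n => f n + (if n = i then x - f i else 0) := by
    funext n
    rcases eq_or_ne n i with rfl | h
    · simp
    · simp [Function.update_of_ne h, h]
  have hs2 : Summable (fun n => if n = i then x - f i else 0) := by
    apply summable_of_ne_finset_zero (s := {i})
    intro n hn
    simp only [Finset.mem_singleton] at hn
    simp [hn]
  constructor
  · rw [hrw]; exact hf.add hs2
  · rw [hrw, Summable.tsum_add hf hs2, tsum_ite_eq]

lemma update_shift (f : ℕ → ℝ) (k : ℕ) (hk : 1 ≤ k) (x : ℝ) :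
    (fun n => Function.update f k x (n + 1)) = Function.update (fun n => f (n + 1)) (k - 1) x := by
  funext n
  simp only [Function.update_apply]
  split_ifs with h1 h2 h2
  · rfl
  · omega
  · omega
  · rfl

end SC9
namespace SC9
open SwissCheese

/-- The classicalisation preorder on abstract Swiss cheeses. -/
def sle (B B' : SwissCheese) : Prop :=
  (B'.r 0 ≤ B.r 0 ∧ dist (B'.a 0) (B.a 0) ≤ B.r 0 - B'.r 0) ∧
  ∀ k, 1 ≤ k →
    (B'.r k = 0 ∧ ball (B.a k) (B.r k) ∩ closedBall (B'.a 0) (B'.r 0) ⊆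
        ⋃ j ∈ Set.Ico 1 k, ball (B'.a j) (B'.r j)) ∨
    (0 < B.r k ∧ B.r k ≤ B'.r k ∧ dist (B'.a k) (B.a k) ≤ B'.r k - B.r k)

lemma sle_refl (B : SwissCheese) : sle B B := by
  refine ⟨⟨le_refl _, by simp⟩, fun k hk => ?_⟩
  rcases eq_or_lt_of_le (B.r_nonneg k) with h | h
  · exact Or.inl ⟨h.symm, by rw [← h, ball_zero]; simp⟩
  · exact Or.inr ⟨h, le_refl _, by simp⟩

lemma sle_closedBall {B B' : SwissCheese} (h : sle B B') :
    closedBall (B'.a 0) (B'.r 0) ⊆ closedBall (B.a 0) (B.r 0) :=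
  closedBall_subset_closedBall' (by linarith [h.1.2])

lemma sle_hole {B B' : SwissCheese} (h : sle B B') {k : ℕ} (hk : 1 ≤ k) (hr : 0 < B'.r k)
    (hrB : 0 < B.r k) : ball (B.a k) (B.r k) ⊆ ball (B'.a k) (B'.r k) := by
  rcases h.2 k hk with ⟨h0, _⟩ | ⟨_, hle, hd⟩
  · exact absurd h0 (ne_of_gt hr)
  · exact ball_subset_ball' (by rw [dist_comm]; linarith)

lemma sle_trans {B B' B'' : SwissCheese} (h1 : sle B B') (h2 : sle B' B'') : sle B B'' := by
  have hcb := sle_closedBall h2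
  refine ⟨⟨le_trans h2.1.1 h1.1.1, ?_⟩, fun k hk => ?_⟩
  · calc dist (B''.a 0) (B.a 0) ≤ dist (B''.a 0) (B'.a 0) + dist (B'.a 0) (B.a 0) :=
        dist_triangle _ _ _
      _ ≤ B.r 0 - B''.r 0 := by linarith [h1.1.2, h2.1.2]
  rcases h2.2 k hk with ⟨h20, h2cov⟩ | ⟨h2pos, h2le, h2d⟩
  · refine Or.inl ⟨h20, ?_⟩
    rcases h1.2 k hk with ⟨h10, h1cov⟩ | ⟨h1pos, h1le, h1d⟩
    · -- dead already at B'
      intro x hx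
      have hx' : x ∈ ⋃ j ∈ Set.Ico 1 k, ball (B'.a j) (B'.r j) :=
        h1cov ⟨hx.1, hcb hx.2⟩
      simp only [mem_iUnion, exists_prop] at hx'
      obtain ⟨j, hj, hxj⟩ := hx'
      have hj1 : 1 ≤ j := (mem_Ico.mp hj).1
      have hjpos : 0 < B'.r j := by
        by_contra hc
        have : B'.r j = 0 := le_antisymm (not_lt.mp hc) (B'.r_nonneg j)
        rw [this, ball_zero] at hxj
        exact hxj
      rcases h2.2 j hj1 with ⟨hj0, hjcov⟩ | ⟨_, hjle, hjd⟩
      · have : x ∈ ⋃ i ∈ Set.Ico 1 j, ball (B''.a i) (B''.r i) := hjcov ⟨hxj, hx.2⟩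
        simp only [mem_iUnion, exists_prop] at this
        obtain ⟨i, hi, hxi⟩ := this
        exact mem_biUnion (show i ∈ Set.Ico 1 k from mem_Ico.mpr ⟨(mem_Ico.mp hi).1, lt_trans (mem_Ico.mp hi).2 (mem_Ico.mp hj).2⟩) hxi
      · exact mem_biUnion hj (ball_subset_ball' (by rw [dist_comm]; linarith) hxj)
    · -- alive at B', dead at B''
      intro x hx
      have hx1 : x ∈ ball (B'.a k) (B'.r k) := ball_subset_ball' (by rw [dist_comm]; linarith) hx.1
      exact h2cov ⟨hx1, hx.2⟩
  · rcases h1.2 k hk with ⟨h10, _⟩ | ⟨h1pos, h1le, h1d⟩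
    · exact absurd h10 (ne_of_gt h2pos)
    · refine Or.inr ⟨h1pos, le_trans h1le h2le, ?_⟩
      calc dist (B''.a k) (B.a k) ≤ dist (B''.a k) (B'.a k) + dist (B'.a k) (B.a k) :=
          dist_triangle _ _ _
        _ ≤ B''.r k - B.r k := by linarith

lemma sle_cheese {B B' : SwissCheese} (h : sle B B') : B'.cheeseSet ⊆ B.cheeseSet := by
  intro x hx
  obtain ⟨hx1, hx2⟩ := hx
  refine ⟨sle_closedBall h hx1, ?_⟩
  intro hmem
  simp only [mem_iUnion, exists_prop] at hmem
  obtain ⟨n, hn, hxn⟩ := hmem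
  have hn1 : (1:ℕ) ≤ n := hn
  rcases h.2 n hn1 with ⟨h0, hcov⟩ | ⟨hpos, hle, hd⟩
  · have : x ∈ ⋃ j ∈ Set.Ico 1 n, ball (B'.a j) (B'.r j) := hcov ⟨hxn, hx1⟩
    simp only [mem_iUnion, exists_prop] at this
    obtain ⟨j, hj, hxj⟩ := this
    exact hx2 (mem_biUnion (show j ∈ Set.Ici 1 from (mem_Ico.mp hj).1) hxj)
  · exact hx2 (mem_biUnion (show n ∈ Set.Ici 1 from hn1)
      (ball_subset_ball' (by rw [dist_comm]; linarith) hxn))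

end SC9
namespace SC9
open SwissCheese

lemma radSum_nonneg (B : SwissCheese) : 0 ≤ B.radSum :=
  tsum_nonneg fun n => B.r_nonneg (n + 1)

lemma term_le_radSum (B : SwissCheese) (h : B.RadSummable) {k : ℕ} (hk : 1 ≤ k) :
    B.r k ≤ B.radSum := by
  have h1 : B.r k = (fun n => B.r (n + 1)) (k - 1) := by
    simp only []
    congr 1
    omega
  rw [radSum, h1]
  exact Summable.le_tsum h _ fun j _ => B.r_nonneg (j + 1)

lemma radSum_eq (B : SwissCheese) : B.radSum = B.r 0 - B.disc := by
  simp [disc]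

/-- The admissible set for the Zorn argument. -/
def P (A : SwissCheese) : Set SwissCheese :=
  {B | B.RadSummable ∧ A.disc ≤ B.disc ∧ B.cheeseSet ⊆ A.cheeseSet ∧ B.r 0 ≤ A.r 0}

lemma A_mem_P (A : SwissCheese) (hsum : A.RadSummable) : A ∈ P A :=
  ⟨hsum, le_refl _, subset_rfl, le_refl _⟩

lemma P_r0_pos {A B : SwissCheese} (hpos : 0 < A.disc) (hB : B ∈ P A) : 0 < B.r 0 := by
  have h1 : 0 ≤ B.radSum := radSum_nonneg B
  have h2 : A.disc ≤ B.disc := hB.2.1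
  have : B.disc = B.r 0 - B.radSum := rfl
  linarith

lemma P_hole_lt {A B : SwissCheese} (hpos : 0 < A.disc) (hB : B ∈ P A) {k : ℕ} (hk : 1 ≤ k) :
    B.r k ≤ B.r 0 - A.disc := by
  have h1 := term_le_radSum B hB.1 hk
  have h2 : A.disc ≤ B.r 0 - B.radSum := hB.2.1
  linarith

end SC9
namespace SC9
open SwissCheese

lemma norm_real_mul (t : ℝ) (ht : 0 ≤ t) (z : ℂ) : ‖(t : ℂ) * z‖ = t * ‖z‖ := by
  rw [norm_mul, Complex.norm_real, Real.norm_eq_abs, abs_of_nonneg ht]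

/-- The outer combination move. -/
lemma outer_move (A M : SwissCheese) (hpos : 0 < A.disc) (hM : M ∈ P A) (k : ℕ) (hk : 1 ≤ k)
    (hrk : 0 < M.r k) (hd : M.r 0 ≤ dist (M.a 0) (M.a k) + M.r k) :
    ∃ M', M' ∈ P A ∧ sle M M' ∧ ¬ sle M' M := by
  have hk0 : k ≠ 0 := by omega
  set d : ℝ := dist (M.a 0) (M.a k) with hd_def
  have hrk0 : M.r k ≤ M.r 0 - A.disc := P_hole_lt hpos hM hk
  have hd0 : 0 < d := by
    have : M.r 0 - M.r k ≤ d := by linarith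
    linarith
  set t : ℝ := M.r k / d with ht_def
  have ht0 : 0 ≤ t := div_nonneg hrk.le hd0.le
  have htd : t * d = M.r k := div_mul_cancel₀ _ (ne_of_gt hd0)
  set a0' : ℂ := M.a 0 + (t : ℂ) * (M.a 0 - M.a k) with ha0'_def
  have hdista : dist a0' (M.a 0) = M.r k := by
    rw [dist_eq_norm]
    have : a0' - M.a 0 = (t : ℂ) * (M.a 0 - M.a k) := by ring
    rw [this, norm_real_mul t ht0, ← dist_eq_norm, ← hd_def, htd]
  have hdistk : dist a0' (M.a k) = d + M.r k := by
    rw [dist_eq_norm]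
    have : a0' - M.a k = ((1 + t : ℝ) : ℂ) * (M.a 0 - M.a k) := by
      push_cast; ring
    rw [this, norm_real_mul _ (by linarith), ← dist_eq_norm, ← hd_def, add_mul, one_mul, htd]
  set M' : SwissCheese :=
    ⟨Function.update M.a 0 a0', Function.update (Function.update M.r k 0) 0 (M.r 0 - M.r k),
      by
        intro n
        rcases eq_or_ne n 0 with rfl | hn0
        · simp only [Function.update_self]; linarith
        · rw [Function.update_of_ne hn0]
          rcases eq_or_ne n k with rfl | hnk
          · simp
          · rw [Function.update_of_ne hnk]; exact M.r_nonneg n⟩ with hM'_def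
  have hr'0 : M'.r 0 = M.r 0 - M.r k := by simp [hM'_def]
  have ha'0 : M'.a 0 = a0' := by simp [hM'_def]
  have hr'k : M'.r k = 0 := by
    simp [hM'_def, Function.update_of_ne hk0]
  have hr'j : ∀ j, j ≠ 0 → j ≠ k → M'.r j = M.r j := by
    intro j h1 h2
    simp [hM'_def, Function.update_of_ne h1, Function.update_of_ne h2]
  have ha'j : ∀ j, j ≠ 0 → M'.a j = M.a j := by
    intro j h1
    simp [hM'_def, Function.update_of_ne h1]
  -- the dead hole is missed by the new outer ball
  have hmiss : ∀ x, x ∈ closedBall (M'.a 0) (M'.r 0) → x ∉ ball (M.a k) (M.r k) := by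
    intro x hx hxk
    rw [mem_closedBall, ha'0, hr'0] at hx
    rw [mem_ball] at hxk
    have h1 : dist a0' (M.a k) ≤ dist a0' x + dist x (M.a k) := dist_triangle _ _ _
    rw [hdistk] at h1
    rw [dist_comm] at hx
    linarith
  have hle : sle M M' := by
    constructor
    · rw [hr'0, ha'0]
      exact ⟨by linarith, by rw [hdista]; linarith⟩
    · intro j hj
      rcases eq_or_ne j k with rfl | hjk
      · refine Or.inl ⟨hr'k, ?_⟩
        intro x hx
        exact absurd hx.1 (hmiss x hx.2)
      · have hj0 : j ≠ 0 := by omega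
        rw [hr'j j hj0 hjk, ha'j j hj0]
        rcases eq_or_lt_of_le (M.r_nonneg j) with h | h
        · refine Or.inl ⟨h.symm, ?_⟩
          rw [← h, ball_zero]
          simp
        · exact Or.inr ⟨h, le_refl _, by simp⟩
  have hnot : ¬ sle M' M := by
    intro hcon
    have := hcon.1.1
    rw [hr'0] at this
    linarith
  -- membership in P
  have hshift : (fun n => M'.r (n + 1)) =
      Function.update (fun n => M.r (n + 1)) (k - 1) 0 := by
    have h1 : (fun n => M'.r (n + 1)) = fun n => Function.update M.r k 0 (n + 1) := by
      funext n
      show Function.update (Function.update M.r k 0) 0 (M.r 0 - M.r k) (n + 1) = _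
      rw [Function.update_of_ne (by omega : n + 1 ≠ 0)]
    rw [h1, update_shift M.r k hk 0]
  have hsum' : M'.RadSummable := by
    rw [RadSummable, hshift]
    exact (tsum_update' _ hM.1 _ _).1
  have hradSum : M'.radSum = M.radSum - M.r k := by
    rw [radSum, hshift, (tsum_update' _ hM.1 _ _).2]
    have : k - 1 + 1 = k := by omega
    rw [this]
    rw [radSum]
    ring
  have hdisc : M'.disc = M.disc := by
    show M'.r 0 - M'.radSum = M.r 0 - M.radSum
    rw [hradSum, hr'0]
    ring
  refine ⟨M', ⟨hsum', by rw [hdisc]; exact hM.2.1,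
    (sle_cheese hle).trans hM.2.2.1, by rw [hr'0]; linarith [hM.2.2.2]⟩, hle, hnot⟩

/-- The hole–hole combination move. -/
lemma merge_move (A M : SwissCheese) (hpos : 0 < A.disc) (hM : M ∈ P A) (k l : ℕ) (hk : 1 ≤ k)
    (hkl : k < l) (hrk : 0 < M.r k) (hrl : 0 < M.r l)
    (hd : dist (M.a k) (M.a l) ≤ M.r k + M.r l) :
    ∃ M', M' ∈ P A ∧ sle M M' ∧ ¬ sle M' M := by
  have hkl' : k ≠ l := by omega
  have hl1 : 1 ≤ l := by omega
  set s : ℝ := M.r k + M.r l with hs_def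
  have hs : 0 < s := by linarith
  set t : ℝ := M.r l / s with ht_def
  have ht0 : 0 ≤ t := div_nonneg hrl.le hs.le
  have hts : t * s = M.r l := div_mul_cancel₀ _ (ne_of_gt hs)
  have ht1 : t ≤ 1 := by
    rw [ht_def, div_le_one hs]; linarith
  set dkl : ℝ := dist (M.a k) (M.a l) with hdkl_def
  have hdkl0 : 0 ≤ dkl := dist_nonneg
  set ak' : ℂ := M.a k + (t : ℂ) * (M.a l - M.a k) with hak'_def
  have hd1 : dist ak' (M.a k) ≤ M.r l := by
    rw [dist_eq_norm]
    have : ak' - M.a k = (t : ℂ) * (M.a l - M.a k) := by ring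
    rw [this, norm_real_mul t ht0, ← dist_eq_norm, dist_comm, ← hdkl_def]
    calc t * dkl ≤ t * s := by
          apply mul_le_mul_of_nonneg_left _ ht0
          rw [hdkl_def]; exact hd
      _ = M.r l := hts
  have hd2 : dist ak' (M.a l) ≤ M.r k := by
    rw [dist_eq_norm]
    have : ak' - M.a l = ((1 - t : ℝ) : ℂ) * (M.a k - M.a l) := by
      push_cast; ring
    rw [this, norm_real_mul _ (by linarith), ← dist_eq_norm, ← hdkl_def]
    have h1 : (1 - t) * dkl ≤ (1 - t) * s := by
      apply mul_le_mul_of_nonneg_left _ (by linarith)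
      rw [hdkl_def]; exact hd
    have h2 : (1 - t) * s = M.r k := by
      have : (1 - t) * s = s - t * s := by ring
      rw [this, hts, hs_def]; ring
    linarith
  set M' : SwissCheese :=
    ⟨Function.update M.a k ak', Function.update (Function.update M.r l 0) k s,
      by
        intro n
        rcases eq_or_ne n k with rfl | hnk
        · simp only [Function.update_self]; linarith
        · rw [Function.update_of_ne hnk]
          rcases eq_or_ne n l with rfl | hnl
          · simp
          · rw [Function.update_of_ne hnl]; exact M.r_nonneg n⟩ with hM'_def
  have hr'k : M'.r k = s := by simp [hM'_def]
  have ha'k : M'.a k = ak' := by simp [hM'_def]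
  have hr'l : M'.r l = 0 := by
    simp [hM'_def, Function.update_of_ne (Ne.symm hkl')]
  have hr'0 : M'.r 0 = M.r 0 := by
    have h1 : (0:ℕ) ≠ k := by omega
    have h2 : (0:ℕ) ≠ l := by omega
    simp [hM'_def, Function.update_of_ne h1, Function.update_of_ne h2]
  have ha'0 : M'.a 0 = M.a 0 := by
    have h1 : (0:ℕ) ≠ k := by omega
    simp [hM'_def, Function.update_of_ne h1]
  have hr'j : ∀ j, j ≠ k → j ≠ l → M'.r j = M.r j := by
    intro j h1 h2
    simp [hM'_def, Function.update_of_ne h1, Function.update_of_ne h2]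
  have ha'j : ∀ j, j ≠ k → M'.a j = M.a j := by
    intro j h1
    simp [hM'_def, Function.update_of_ne h1]
  have hballk : ball (M.a l) (M.r l) ⊆ ball (M'.a k) (M'.r k) := by
    rw [ha'k, hr'k]
    apply ball_subset_ball'
    rw [dist_comm]
    linarith [hd2]
  have hle : sle M M' := by
    constructor
    · rw [hr'0, ha'0]
      exact ⟨le_refl _, by simp⟩
    · intro j hj
      rcases eq_or_ne j k with rfl | hjk
      · refine Or.inr ⟨hrk, ?_, ?_⟩
        · rw [hr'k]; linarith
        · rw [hr'k, ha'k]; linarith [hd1]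
      rcases eq_or_ne j l with rfl | hjl
      · refine Or.inl ⟨hr'l, ?_⟩
        intro x hx
        exact mem_biUnion (show k ∈ Set.Ico 1 j from Set.mem_Ico.mpr ⟨hk, hkl⟩) (hballk hx.1)
      · rw [hr'j j hjk hjl, ha'j j hjk]
        rcases eq_or_lt_of_le (M.r_nonneg j) with h | h
        · refine Or.inl ⟨h.symm, ?_⟩
          rw [← h, ball_zero]
          simp
        · exact Or.inr ⟨h, le_refl _, by simp⟩
  have hnot : ¬ sle M' M := by
    intro hcon
    rcases hcon.2 l hl1 with ⟨h0, _⟩ | ⟨h1, _, _⟩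
    · exact absurd h0 (ne_of_gt hrl)
    · rw [hr'l] at h1
      exact lt_irrefl _ h1
  have hshift : (fun n => M'.r (n + 1)) =
      Function.update (Function.update (fun n => M.r (n + 1)) (l - 1) 0) (k - 1) s := by
    have h1 : (fun n => M'.r (n + 1)) =
        fun n => Function.update (Function.update M.r l 0) k s (n + 1) := rfl
    rw [h1, update_shift _ k hk s, update_shift M.r l hl1 0]
  have hsum' : M'.RadSummable := by
    rw [RadSummable, hshift]
    exact (tsum_update' _ (tsum_update' _ hM.1 _ _).1 _ _).1
  have hradSum : M'.radSum = M.radSum := by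
    rw [radSum, hshift, (tsum_update' _ (tsum_update' _ hM.1 _ _).1 _ _).2,
      (tsum_update' _ hM.1 _ _).2]
    have h1 : l - 1 + 1 = l := by omega
    have h2 : Function.update (fun n => M.r (n + 1)) (l - 1) 0 (k - 1) = M.r k := by
      rw [Function.update_of_ne (by omega : k - 1 ≠ l - 1)]
      show M.r (k - 1 + 1) = M.r k
      congr 1
      omega
    rw [h1, h2, radSum, hs_def]
    ring
  have hdisc : M'.disc = M.disc := by
    show M'.r 0 - M'.radSum = M.r 0 - M.radSum
    rw [hradSum, hr'0]
  refine ⟨M', ⟨hsum', by rw [hdisc]; exact hM.2.1,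
    (sle_cheese hle).trans hM.2.2.1, by rw [hr'0]; exact hM.2.2.2⟩, hle, hnot⟩

end SC9
namespace SC9
open SwissCheese

lemma chain_ub (A : SwissCheese) (hsum : A.RadSummable) (hpos : 0 < A.disc)
    (c : Set SwissCheese) (hcP : c ⊆ P A) (hc : IsChain sle c) :
    ∃ ub ∈ P A, ∀ B ∈ c, sle B ub := by
  rcases c.eq_empty_or_nonempty with rfl | hne
  · exact ⟨A, A_mem_P A hsum, by simp⟩
  classical
  haveI : Nonempty ↥c := hne.to_subtype
  have htot : ∀ B B' : ↥c, sle B.1 B'.1 ∨ sle B'.1 B.1 := by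
    intro B B'
    rcases eq_or_ne B B' with rfl | hne'
    · exact Or.inl (sle_refl _)
    · exact hc B.2 B'.2 (fun h => hne' (Subtype.ext h))
  -- the limiting outer radius
  set r0s : ℝ := ⨅ B : ↥c, (B : SwissCheese).r 0 with hr0s_def
  have hbdd0 : BddBelow (Set.range fun B : ↥c => (B : SwissCheese).r 0) := by
    refine ⟨0, ?_⟩
    rintro x ⟨B, rfl⟩
    exact B.1.r_nonneg 0
  have hr0s_le : ∀ B : ↥c, r0s ≤ B.1.r 0 := fun B => ciInf_le hbdd0 B
  have hr0s_nonneg : 0 ≤ r0s := le_ciInf fun B => B.1.r_nonneg 0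
  -- the limiting outer centre
  obtain ⟨a0s, ha0s⟩ :=
    IsCompact.nonempty_iInter_of_directed_nonempty_isCompact_isClosed
      (fun B : ↥c => closedBall (B.1.a 0) (B.1.r 0 - r0s))
      (by
        intro B B'
        rcases htot B B' with h | h
        · exact ⟨B', closedBall_subset_closedBall' (by linarith [h.1.1, h.1.2]), subset_rfl⟩
        · exact ⟨B, subset_rfl, closedBall_subset_closedBall' (by linarith [h.1.1, h.1.2])⟩)
      (fun B => nonempty_closedBall.mpr (by linarith [hr0s_le B]))
      (fun B => isCompact_closedBall _ _) (fun B => Metric.isClosed_closedBall)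
  have ha0 : ∀ B : ↥c, dist a0s (B.1.a 0) ≤ B.1.r 0 - r0s := by
    intro B
    exact mem_closedBall.mp (mem_iInter.mp ha0s B)
  -- dead holes
  set Dead : ℕ → Prop := fun k => ∃ B : ↥c, B.1.r k = 0 with hDead_def
  have halive_pos : ∀ k, ¬ Dead k → ∀ B : ↥c, 0 < B.1.r k := by
    intro k h B
    rcases eq_or_lt_of_le (B.1.r_nonneg k) with h' | h'
    · exact absurd ⟨B, h'.symm⟩ h
    · exact h'
  have hbddk : ∀ k, 1 ≤ k → BddAbove (Set.range fun B : ↥c => B.1.r k) := by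
    intro k hk
    refine ⟨A.r 0 - A.disc, ?_⟩
    rintro x ⟨B, rfl⟩
    have h1 := P_hole_lt hpos (hcP B.2) hk
    have h2 := (hcP B.2).2.2.2
    linarith
  -- the limiting radii
  set rs : ℕ → ℝ := fun k => if k = 0 then r0s else if Dead k then 0 else ⨆ B : ↥c, B.1.r k
    with hrs_def
  have hrs0 : rs 0 = r0s := by simp [hrs_def]
  have hrs_dead : ∀ k, k ≠ 0 → Dead k → rs k = 0 := by
    intro k h1 h2; simp [hrs_def, h1, h2]
  have hrs_alive : ∀ k, k ≠ 0 → ¬ Dead k → rs k = ⨆ B : ↥c, B.1.r k := by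
    intro k h1 h2; simp [hrs_def, h1, h2]
  have hsup_le : ∀ k, 1 ≤ k → ¬ Dead k → ∀ B : ↥c, B.1.r k ≤ rs k := by
    intro k hk hd B
    rw [hrs_alive k (by omega) hd]
    exact le_ciSup (hbddk k hk) B
  have hmono : ∀ k, 1 ≤ k → ¬ Dead k → ∀ B B' : ↥c, sle B.1 B'.1 →
      B.1.r k ≤ B'.1.r k ∧ dist (B'.1.a k) (B.1.a k) ≤ B'.1.r k - B.1.r k := by
    intro k hk hd B B' h
    rcases h.2 k hk with ⟨h0, _⟩ | ⟨_, h1, h2⟩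
    · exact absurd h0 (ne_of_gt (halive_pos k hd B'))
    · exact ⟨h1, h2⟩
  -- the limiting hole centres
  have hcenter : ∀ k, ∃ x : ℂ, 1 ≤ k → ¬ Dead k → ∀ B : ↥c, dist x (B.1.a k) ≤ rs k - B.1.r k := by
    intro k
    by_cases hk : 1 ≤ k
    · by_cases hd : Dead k
      · exact ⟨0, fun _ h => absurd hd h⟩
      · obtain ⟨x, hx⟩ :=
          IsCompact.nonempty_iInter_of_directed_nonempty_isCompact_isClosed
            (fun B : ↥c => closedBall (B.1.a k) (rs k - B.1.r k))
            (by
              intro B B'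
              rcases htot B B' with h | h
              · refine ⟨B', closedBall_subset_closedBall' ?_, subset_rfl⟩
                obtain ⟨h1, h2⟩ := hmono k hk hd B B' h
                linarith
              · refine ⟨B, subset_rfl, closedBall_subset_closedBall' ?_⟩
                obtain ⟨h1, h2⟩ := hmono k hk hd B' B h
                linarith)
            (fun B => nonempty_closedBall.mpr (by linarith [hsup_le k hk hd B]))
            (fun B => isCompact_closedBall _ _) (fun B => Metric.isClosed_closedBall)
        exact ⟨x, fun _ _ B => mem_closedBall.mp (mem_iInter.mp hx B)⟩
    · exact ⟨0, fun h => absurd h hk⟩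
  choose as has using hcenter
  -- the upper bound cheese
  set Bs : SwissCheese :=
    ⟨fun k => if k = 0 then a0s else as k, rs, by
      intro n
      rcases eq_or_ne n 0 with rfl | hn
      · rw [hrs0]; exact hr0s_nonneg
      · by_cases hd : Dead n
        · rw [hrs_dead n hn hd]
        · rw [hrs_alive n hn hd]
          obtain B0 := Classical.arbitrary ↥c
          exact le_trans (B0.1.r_nonneg n) (le_ciSup (hbddk n (by omega)) B0)⟩ with hBs_def
  have hBs_r : ∀ k, Bs.r k = rs k := fun k => rfl
  have hBs_a0 : Bs.a 0 = a0s := rfl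
  have hBs_ak : ∀ k, k ≠ 0 → Bs.a k = as k := by
    intro k hk
    show (if k = 0 then a0s else as k) = as k
    rw [if_neg hk]
  -- dead holes are covered by earlier holes of the upper bound
  have covered : ∀ k, 1 ≤ k → Dead k → ∀ B : ↥c,
      ball (B.1.a k) (B.1.r k) ∩ closedBall a0s r0s ⊆
        ⋃ j ∈ Set.Ico 1 k, ball (Bs.a j) (Bs.r j) := by
    intro k
    induction k using Nat.strong_induction_on with
    | _ k IH =>
      intro hk hdead B x hx
      rcases eq_or_lt_of_le (B.1.r_nonneg k) with hBk | hBk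
      · exfalso
        have := mem_ball.mp hx.1
        rw [← hBk] at this
        exact absurd this (not_lt.mpr dist_nonneg)
      obtain ⟨B2, hB2⟩ := hdead
      have hBB2 : sle B.1 B2.1 := by
        rcases htot B B2 with h | h
        · exact h
        · rcases h.2 k hk with ⟨h0, _⟩ | ⟨h1, _, _⟩
          · exact absurd h0 (ne_of_gt hBk)
          · rw [hB2] at h1
            exact absurd h1 (lt_irrefl 0)
      rcases hBB2.2 k hk with ⟨_, hcov⟩ | ⟨_, h1, _⟩
      · have hxcb2 : x ∈ closedBall (B2.1.a 0) (B2.1.r 0) := by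
          rw [mem_closedBall]
          calc dist x (B2.1.a 0) ≤ dist x a0s + dist a0s (B2.1.a 0) := dist_triangle _ _ _
            _ ≤ B2.1.r 0 := by
                have := mem_closedBall.mp hx.2
                have := ha0 B2
                linarith
        have hmem := hcov ⟨hx.1, hxcb2⟩
        simp only [mem_iUnion, exists_prop] at hmem
        obtain ⟨j, hj, hxj⟩ := hmem
        have hj1 : 1 ≤ j := (Set.mem_Ico.mp hj).1
        have hjk : j < k := (Set.mem_Ico.mp hj).2
        have hB2j : 0 < B2.1.r j := by
          rcases eq_or_lt_of_le (B2.1.r_nonneg j) with h' | h'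
          · exfalso
            have := mem_ball.mp hxj
            rw [← h'] at this
            exact absurd this (not_lt.mpr dist_nonneg)
          · exact h'
        by_cases hdj : Dead j
        · have hmem2 := IH j hjk hj1 hdj B2 ⟨hxj, hx.2⟩
          simp only [mem_iUnion, exists_prop] at hmem2
          obtain ⟨i, hi, hxi⟩ := hmem2
          exact mem_biUnion
            (Set.mem_Ico.mpr ⟨(Set.mem_Ico.mp hi).1, lt_trans (Set.mem_Ico.mp hi).2 hjk⟩) hxi
        · refine mem_biUnion hj ?_
          rw [hBs_ak j (by omega), hBs_r, mem_ball]
          calc dist x (as j) ≤ dist x (B2.1.a j) + dist (B2.1.a j) (as j) := dist_triangle _ _ _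
            _ < rs j := by
                have h2 := has j hj1 hdj B2
                rw [dist_comm (B2.1.a j) (as j)]
                have h3 := mem_ball.mp hxj
                linarith
      · rw [hB2] at h1
        linarith
  -- Bs is an upper bound for the chain
  have hub : ∀ B ∈ c, sle B Bs := by
    intro B hBmem
    set B' : ↥c := ⟨B, hBmem⟩ with hB'_def
    constructor
    · constructor
      · rw [hBs_r, hrs0]; exact hr0s_le B'
      · rw [hBs_r, hrs0, hBs_a0]; exact ha0 B'
    · intro k hk
      by_cases hd : Dead k
      · refine Or.inl ⟨by rw [hBs_r]; exact hrs_dead k (by omega) hd, ?_⟩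
        rw [hBs_a0, hBs_r, hrs0]
        exact covered k hk hd B'
      · refine Or.inr ⟨halive_pos k hd B', by rw [hBs_r]; exact hsup_le k hk hd B', ?_⟩
        rw [hBs_r, hBs_ak k (by omega)]
        exact has k hk hd B'
  -- partial sums of the limiting radii are controlled
  have key : ∀ F : Finset ℕ, ∑ n ∈ F, rs (n + 1) ≤ r0s - A.disc := by
    intro F
    refine le_of_forall_pos_le_add ?_
    intro ε hε
    set ε' : ℝ := ε / (F.card + 1) with hε'_def
    have hε'pos : 0 < ε' := by positivity
    have hW : ∀ n : ℕ, ∃ B : ↥c, rs (n + 1) ≤ B.1.r (n + 1) + ε' := by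
      intro n
      by_cases hd : Dead (n + 1)
      · obtain B0 := Classical.arbitrary ↥c
        refine ⟨B0, ?_⟩
        rw [hrs_dead _ (by omega) hd]
        have := B0.1.r_nonneg (n + 1)
        linarith
      · have h1 : rs (n + 1) - ε' < ⨆ B : ↥c, B.1.r (n + 1) := by
          rw [← hrs_alive _ (by omega) hd]
          linarith
        obtain ⟨B, hB⟩ := exists_lt_of_lt_ciSup h1
        exact ⟨B, by linarith⟩
    choose W hWp using hW
    obtain ⟨B0, hB0⟩ : ∃ B : ↥c, B.1.r 0 < r0s + ε' := exists_lt_of_ciInf_lt (by linarith)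
    -- a common upper bound in the chain for finitely many elements
    have chainub : ∀ s : Finset ℕ, ∃ Bu : ↥c, ∀ n ∈ s, sle (W n).1 Bu.1 := by
      intro s
      induction s using Finset.induction_on with
      | empty => exact ⟨Classical.arbitrary ↥c, by simp⟩
      | insert a s' hni IH =>
        obtain ⟨Bu, hBu⟩ := IH
        rcases htot (W a) Bu with h | h
        · refine ⟨Bu, ?_⟩
          intro n hn
          rcases Finset.mem_insert.mp hn with rfl | hn'
          · exact h
          · exact hBu n hn'
        · refine ⟨W a, ?_⟩
          intro n hn
          rcases Finset.mem_insert.mp hn with rfl | hn'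
          · exact sle_refl _
          · exact sle_trans (hBu n hn') h
    obtain ⟨Bu1, hBu1⟩ := chainub F
    obtain ⟨Bu, hBuB0, hBuW⟩ : ∃ Bu : ↥c, sle B0.1 Bu.1 ∧ ∀ n ∈ F, sle (W n).1 Bu.1 := by
      rcases htot Bu1 B0 with h | h
      · exact ⟨B0, sle_refl _, fun n hn => sle_trans (hBu1 n hn) h⟩
      · exact ⟨Bu1, h, hBu1⟩
    have h1 : ∀ n ∈ F, rs (n + 1) ≤ Bu.1.r (n + 1) + ε' := by
      intro n hn
      by_cases hd : Dead (n + 1)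
      · rw [hrs_dead _ (by omega) hd]
        have := Bu.1.r_nonneg (n + 1)
        linarith
      · have h2 := (hmono (n + 1) (by omega) hd (W n) Bu (hBuW n hn)).1
        have h3 := hWp n
        linarith
    have hcard : ((F.card : ℝ) + 1) * ε' = ε := by
      rw [hε'_def]
      field_simp
    have h4 : ∑ n ∈ F, rs (n + 1) ≤ ∑ n ∈ F, Bu.1.r (n + 1) + F.card * ε' := by
      calc ∑ n ∈ F, rs (n + 1) ≤ ∑ n ∈ F, (Bu.1.r (n + 1) + ε') := Finset.sum_le_sum h1
        _ = ∑ n ∈ F, Bu.1.r (n + 1) + F.card * ε' := by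
            rw [Finset.sum_add_distrib, Finset.sum_const, nsmul_eq_mul]
    have h5 : ∑ n ∈ F, Bu.1.r (n + 1) ≤ Bu.1.radSum :=
      Summable.sum_le_tsum F (fun i _ => Bu.1.r_nonneg (i + 1)) (hcP Bu.2).1
    have h6 : Bu.1.radSum ≤ Bu.1.r 0 - A.disc := by
      have := (hcP Bu.2).2.1
      have heq : Bu.1.radSum = Bu.1.r 0 - Bu.1.disc := radSum_eq _
      linarith
    have h7 : Bu.1.r 0 ≤ B0.1.r 0 := hBuB0.1.1
    linarith
  -- Bs is admissible
  have hBsSummable : Bs.RadSummable := by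
    exact summable_of_sum_le (c := r0s - A.disc) (fun n => Bs.r_nonneg (n + 1))
      (fun u => key u)
  have hBstsum : Bs.radSum ≤ r0s - A.disc := Summable.tsum_le_of_sum_le hBsSummable key
  obtain ⟨B0m, hB0m⟩ := hne
  refine ⟨Bs, ⟨hBsSummable, ?_, ?_, ?_⟩, hub⟩
  · show A.disc ≤ Bs.r 0 - Bs.radSum
    have : Bs.r 0 = r0s := hBs_r 0 ▸ hrs0
    linarith [this ▸ hBstsum]
  · exact (sle_cheese (hub B0m hB0m)).trans (hcP hB0m).2.2.1
  · have h1 : Bs.r 0 = r0s := by rw [hBs_r, hrs0]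
    rw [h1]
    exact le_trans (hr0s_le ⟨B0m, hB0m⟩) (hcP hB0m).2.2.2

end SC9
/-- Classicalisation theorem: if `δ₁(A) > 0` (in particular `ρ(A) < ∞`), then
there is a classical abstract Swiss cheese `B` with `δ₁(B) ≥ δ₁(A)` and `X_B ⊆ X_A`. -/
theorem stmt_9 (A : SwissCheese) (hsum : A.RadSummable) (hpos : 0 < A.disc) :
    ∃ B : SwissCheese, B.IsClassical ∧ A.disc ≤ B.disc ∧ B.cheeseSet ⊆ A.cheeseSet := by
  classical
  have hzorn : ∃ m : {B : SwissCheese // B ∈ SC9.P A},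
      ∀ a : {B : SwissCheese // B ∈ SC9.P A}, SC9.sle m.1 a.1 → SC9.sle a.1 m.1 := by
    apply exists_maximal_of_chains_bounded
    · intro ch hch
      have hsub : Subtype.val '' ch ⊆ SC9.P A := by
        rintro _ ⟨B, hB, rfl⟩
        exact B.2
      have hch' : IsChain SC9.sle (Subtype.val '' ch) := by
        rintro _ ⟨B, hB, rfl⟩ _ ⟨B', hB', rfl⟩ hne
        exact hch hB hB' (fun h => hne (by rw [h]))
      obtain ⟨ub, hubP, hub⟩ := SC9.chain_ub A hsum hpos _ hsub hch'
      exact ⟨⟨ub, hubP⟩, fun B hB => hub B.1 ⟨B, hB, rfl⟩⟩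
    · intro a b c' hab hbc
      exact SC9.sle_trans hab hbc
  obtain ⟨⟨M, hMP⟩, hmax⟩ := hzorn
  have hclass : M.IsClassical := by
    refine ⟨hMP.1, SC9.P_r0_pos hpos hMP, ?_⟩
    intro k hk
    obtain ⟨hk1, hkpos⟩ := hk
    constructor
    · by_contra hcon
      have hd : M.r 0 ≤ dist (M.a 0) (M.a k) + M.r k := by
        rcases Set.not_subset.mp hcon with ⟨x, hx1, hx2⟩
        have h1 : dist x (M.a k) ≤ M.r k := mem_closedBall.mp hx1
        have h2 : M.r 0 ≤ dist x (M.a 0) := not_lt.mp (fun h => hx2 (mem_ball.mpr h))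
        have h3 : dist x (M.a 0) ≤ dist x (M.a k) + dist (M.a k) (M.a 0) := dist_triangle _ _ _
        rw [dist_comm (M.a k) (M.a 0)] at h3
        linarith
      obtain ⟨M', hM'P, hle, hnot⟩ := SC9.outer_move A M hpos hMP k hk1 hkpos hd
      exact hnot (hmax ⟨M', hM'P⟩ hle)
    · intro l hl hlk
      by_contra hcon
      obtain ⟨x, hx⟩ := Set.nonempty_iff_ne_empty.mpr hcon
      have hdist : dist (M.a k) (M.a l) ≤ M.r k + M.r l := by
        have h1 := mem_closedBall.mp hx.1
        have h2 := mem_closedBall.mp hx.2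
        have h3 : dist (M.a k) (M.a l) ≤ dist (M.a k) x + dist x (M.a l) := dist_triangle _ _ _
        rw [dist_comm (M.a k) x] at h3
        linarith
      rcases lt_or_gt_of_ne (hlk : l ≠ k) with h | h
      · obtain ⟨M', hM'P, hle, hnot⟩ := SC9.merge_move A M hpos hMP l k hl.1 h hl.2 hkpos
          (by rw [dist_comm]; linarith)
        exact hnot (hmax ⟨M', hM'P⟩ hle)
      · obtain ⟨M', hM'P, hle, hnot⟩ := SC9.merge_move A M hpos hMP k l hk1 h hkpos hl.2 hdist
        exact hnot (hmax ⟨M', hM'P⟩ hle)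
  exact ⟨M, hclass, hMP.2.1, hMP.2.2.1⟩
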